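/- Let Q be a finite (left) quasifield with q elements, let A ⊆ Q\{0} be nonempty, and let c be a real number with 0 < c and c + c^{1/2} < 1. Then |A+A|·|A·A| ≥ min{ c·q·|A| , c·|A|⁴/q }. -/

import Mathlib

/-- A finite (left) quasifield. -/
class Quasifield (Q : Type*) extends AddCommGroup Q, Mul Q, One Q where
  one_ne_zero : (1 : Q) ≠ 0
  one_mul : ∀ a : Q, 1 * a = a
  mul_one : ∀ a : Q, a * 1 = a
  zero_mul : ∀ a : Q, 0 * a = 0
  mul_zero : ∀ a : Q, a * 0 = 0
  mul_ne_zero : ∀ a b : Q, a ≠ 0 → b ≠ 0 → a * b ≠ 0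
  existsUnique_mul_left : ∀ a b : Q, a ≠ 0 → b ≠ 0 → ∃! x : Q, a * x = b
  existsUnique_mul_right : ∀ a b : Q, a ≠ 0 → b ≠ 0 → ∃! y : Q, y * a = b
  left_distrib : ∀ a b c : Q, a * (b + c) = a * b + a * c
  existsUnique_affine : ∀ a b c : Q, a ≠ b → ∃! x : Q, a * x = b * x + c

/-- The kernel of a quasifield. -/
def Quasifield.kernel (Q : Type*) [Quasifield Q] : Set Q :=
  {k | (∀ x y : Q, (x + y) * k = x * k + y * k) ∧ ∀ x y : Q, (x * y) * k = x * (y * k)}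

open scoped Pointwise

open Finset

private lemma qf_grp_aux {G : Type*} [AddCommGroup G] {p q u v : G} (h : p - u = q - v) :
    p = q + (u - v) := by
  have h2 : p + v = q + u := by
    calc p + v = (p - u) + (u + v) := by abel
      _ = (q - v) + (u + v) := by rw [h]
      _ = q + u := by abel
  calc p = (p + v) - v := by abel
    _ = (q + u) - v := by rw [h2]
    _ = q + (u - v) := by abel

private lemma qf_graph_card {Q : Type*} [Fintype Q] [DecidableEq Q] (f : Q → Q) :
    (Finset.univ.filter (fun z : Q × Q => z.2 = f z.1)).card = Fintype.card Q := by
  have himg : (Finset.univ.filter (fun z : Q × Q => z.2 = f z.1))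
      = Finset.univ.image (fun x : Q => (x, f x)) := by
    ext z
    simp only [Finset.mem_filter, Finset.mem_univ, true_and, Finset.mem_image, Prod.ext_iff]
    constructor
    · intro h; exact ⟨z.1, rfl, h.symm⟩
    · rintro ⟨x, hx1, hx2⟩; rw [← hx2, hx1]
  rw [himg, Finset.card_image_of_injective _ (fun a b h => congrArg Prod.fst h),
    Finset.card_univ]

private lemma qf_mul_cancel_left {Q : Type*} [Quasifield Q] {a b b' : Q}
    (ha : a ≠ 0) (hb : b ≠ 0) (h : a * b = a * b') : b = b' := by
  obtain ⟨x, hx, hu⟩ := Quasifield.existsUnique_mul_left a (a * b) ha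
    (Quasifield.mul_ne_zero a b ha hb)
  exact (hu b rfl).trans (hu b' h.symm).symm

/-- two distinct lines meet in at most one point -/
private lemma qf_two_lines {Q : Type*} [Quasifield Q] [Fintype Q] [DecidableEq Q]
    {a b a' b' : Q} (ha : a ≠ 0) (hb : b ≠ 0) (hne : (a, b) ≠ (a', b')) :
    (Finset.univ.filter (fun z : Q × Q =>
      z.2 = a * z.1 - a * b ∧ z.2 = a' * z.1 - a' * b')).card ≤ 1 := by
  rw [Finset.card_le_one]
  rintro z hz z' hz'
  simp only [Finset.mem_filter, Finset.mem_univ, true_and] at hz hz'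
  obtain ⟨h1, h2⟩ := hz
  obtain ⟨h1', h2'⟩ := hz'
  by_cases haa : a = a'
  · subst haa
    have hbb : b = b' := by
      apply qf_mul_cancel_left ha hb
      have := h1.symm.trans h2
      have h3 : a * z.1 - (a * z.1 - a * b) = a * z.1 - (a * z.1 - a * b') := by rw [← this]
      simpa using h3
    exact absurd (by rw [hbb]) hne
  · obtain ⟨x, hx, hu⟩ := Quasifield.existsUnique_affine a a' (a * b - a' * b') haa
    have e1 : a * z.1 = a' * z.1 + (a * b - a' * b') := qf_grp_aux (h1.symm.trans h2)
    have e1' : a * z'.1 = a' * z'.1 + (a * b - a' * b') := qf_grp_aux (h1'.symm.trans h2')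
    have hxx : z.1 = z'.1 := (hu z.1 e1).trans (hu z'.1 e1').symm
    have hyy : z.2 = z'.2 := by rw [h1, h1', hxx]
    exact Prod.ext hxx hyy

set_option maxHeartbeats 1000000 in
/-- Corollary 1.5 (generalized Garaev): for nonempty `A ⊆ Q \ {0}` and any real
`c > 0` with `c + √c < 1`, one has `|A+A|·|A·A| ≥ min (c q |A|) (c |A|⁴ / q)`. -/
theorem stmt_1 {Q : Type*} [Quasifield Q] [Fintype Q] [DecidableEq Q]
    (A : Finset Q) (hA : A.Nonempty) (hA0 : ∀ a ∈ A, a ≠ 0)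
    (c : ℝ) (hc : 0 < c) (hc1 : c + Real.sqrt c < 1) :
    min (c * (Fintype.card Q) * A.card) (c * (A.card : ℝ) ^ 4 / (Fintype.card Q)) ≤
      ((A + A).card : ℝ) * ((A * A).card : ℝ) := by
  classical
  by_contra hcon
  push_neg at hcon
  rw [lt_min_iff] at hcon
  obtain ⟨hlt1, hlt2⟩ := hcon
  set n : ℕ := A.card with hn
  set q : ℕ := Fintype.card Q with hq
  have hn0 : 0 < n := hA.card_pos
  have hq0 : 0 < q := @Fintype.card_pos Q _ ⟨0⟩
  set S : Finset Q := A + A with hSdef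
  set P : Finset Q := A * A with hPdef
  set W : Finset (Q × Q) := A ×ˢ A with hWdef
  have hW : W.card = n ^ 2 := by rw [hWdef, Finset.card_product, ← hn, sq]
  set L : Q × Q → ℕ :=
    fun z => (W.filter fun w => z.2 = w.1 * z.1 - w.1 * w.2).card with hL
  -- (1) total incidence count
  have hsum1 : ∑ z : Q × Q, L z = n ^ 2 * q := by
    have h1 : ∀ z : Q × Q, L z = ∑ w ∈ W, if z.2 = w.1 * z.1 - w.1 * w.2 then 1 else 0 := by
      intro z
      simp only [hL]
      exact Finset.card_filter _ _
    simp_rw [h1]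
    rw [Finset.sum_comm]
    have h2 : ∀ w ∈ W, (∑ z : Q × Q, if z.2 = w.1 * z.1 - w.1 * w.2 then 1 else 0) = q := by
      intro w _
      rw [← Finset.card_filter]
      exact qf_graph_card (fun X => w.1 * X - w.1 * w.2)
    rw [Finset.sum_congr rfl h2, Finset.sum_const, smul_eq_mul, hW]
  -- (2) second moment
  have hsum2 : ∑ z : Q × Q, L z * L z ≤ n ^ 2 * q + n ^ 2 * n ^ 2 := by
    set cc : Q × Q → Q × Q → ℕ := fun w w' =>
      (Finset.univ.filter (fun z : Q × Q =>
        z.2 = w.1 * z.1 - w.1 * w.2 ∧ z.2 = w'.1 * z.1 - w'.1 * w'.2)).card with hcc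
    have hLL : ∑ z : Q × Q, L z * L z = ∑ w ∈ W, ∑ w' ∈ W, cc w w' := by
      have h1 : ∀ z : Q × Q, L z * L z
          = ∑ w ∈ W, ∑ w' ∈ W,
            if z.2 = w.1 * z.1 - w.1 * w.2 ∧ z.2 = w'.1 * z.1 - w'.1 * w'.2 then 1 else 0 := by
        intro z
        simp only [hL]
        rw [Finset.card_filter, Finset.sum_mul_sum]
        refine Finset.sum_congr rfl fun w _ => Finset.sum_congr rfl fun w' _ => ?_
        by_cases p1 : z.2 = w.1 * z.1 - w.1 * w.2 <;>
          by_cases p2 : z.2 = w'.1 * z.1 - w'.1 * w'.2 <;> simp [p1, p2]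
      simp_rw [h1]
      rw [Finset.sum_comm]
      refine Finset.sum_congr rfl fun w _ => ?_
      rw [Finset.sum_comm]
      refine Finset.sum_congr rfl fun w' _ => ?_
      simp only [hcc]
      exact (Finset.card_filter _ _).symm
    rw [hLL]
    have hbound : ∀ w ∈ W, ∑ w' ∈ W, cc w w' ≤ q + n ^ 2 := by
      intro w hw
      rw [← Finset.add_sum_erase W _ hw]
      have hdiag : cc w w = q := by
        simp only [hcc, and_self]
        exact qf_graph_card (fun X => w.1 * X - w.1 * w.2)
      have hoff : ∑ w' ∈ W.erase w, cc w w' ≤ n ^ 2 := by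
        calc ∑ w' ∈ W.erase w, cc w w' ≤ ∑ _w' ∈ W.erase w, 1 := by
              refine Finset.sum_le_sum fun w' hw' => ?_
              have hwW : w ∈ W := hw
              have hw'ne : w' ≠ w := Finset.ne_of_mem_erase hw'
              rw [hWdef, Finset.mem_product] at hwW
              refine qf_two_lines (hA0 w.1 hwW.1) (hA0 w.2 hwW.2) (fun h => ?_)
              rw [Prod.mk.eta, Prod.mk.eta] at h
              exact hw'ne h.symm
          _ = (W.erase w).card := by rw [Finset.sum_const, smul_eq_mul, mul_one]
          _ ≤ W.card := Finset.card_le_card (Finset.erase_subset _ _)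
          _ = n ^ 2 := hW
      omega
    calc ∑ w ∈ W, ∑ w' ∈ W, cc w w' ≤ ∑ _w ∈ W, (q + n ^ 2) := Finset.sum_le_sum hbound
      _ = n ^ 2 * (q + n ^ 2) := by rw [Finset.sum_const, smul_eq_mul, hW]
      _ = n ^ 2 * q + n ^ 2 * n ^ 2 := by ring
  -- (3) incidences on S × P
  have hsum3 : n ^ 3 ≤ ∑ z ∈ S ×ˢ P, L z := by
    have h1 : ∑ z ∈ S ×ˢ P, L z
        = ∑ w ∈ W, ((S ×ˢ P).filter fun z => z.2 = w.1 * z.1 - w.1 * w.2).card := by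
      have h2 : ∀ z ∈ S ×ˢ P, L z
          = ∑ w ∈ W, if z.2 = w.1 * z.1 - w.1 * w.2 then 1 else 0 := by
        intro z _
        simp only [hL]
        exact Finset.card_filter _ _
      rw [Finset.sum_congr rfl h2, Finset.sum_comm]
      exact Finset.sum_congr rfl fun w _ => (Finset.card_filter _ _).symm
    rw [h1]
    have h3 : ∀ w ∈ W, n ≤ ((S ×ˢ P).filter fun z => z.2 = w.1 * z.1 - w.1 * w.2).card := by
      rintro ⟨a, b⟩ hw
      rw [hWdef, Finset.mem_product] at hw
      obtain ⟨haA, hbA⟩ := hw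
      have himg : A.image (fun x => (x + b, a * x))
          ⊆ (S ×ˢ P).filter fun z => z.2 = a * z.1 - a * b := by
        intro z hz
        simp only [Finset.mem_image] at hz
        obtain ⟨x, hx, rfl⟩ := hz
        simp only [Finset.mem_filter, Finset.mem_product]
        refine ⟨⟨Finset.add_mem_add hx hbA, Finset.mul_mem_mul haA hx⟩, ?_⟩
        show a * x = a * (x + b) - a * b
        rw [Quasifield.left_distrib]
        abel
      calc n = (A.image (fun x => (x + b, a * x))).card := by
            rw [Finset.card_image_of_injective _
              (fun x y h => add_right_cancel (Prod.ext_iff.mp h).1), hn]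
        _ ≤ _ := Finset.card_le_card himg
    calc n ^ 3 = ∑ _w ∈ W, n := by rw [Finset.sum_const, smul_eq_mul, hW]; ring
      _ ≤ _ := Finset.sum_le_sum h3
  -- real part
  have hq0R : (0 : ℝ) < q := by exact_mod_cast hq0
  have hqne : (q : ℝ) ≠ 0 := ne_of_gt hq0R
  have hn0R : (0 : ℝ) < n := by exact_mod_cast hn0
  set m : ℝ := (n : ℝ) ^ 2 / q with hm
  have hsum1R : ∑ z : Q × Q, (L z : ℝ) = (n : ℝ) ^ 2 * q := by
    rw [← Nat.cast_sum]
    exact_mod_cast congrArg (Nat.cast : ℕ → ℝ) hsum1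
  have hsum2R : ∑ z : Q × Q, (L z : ℝ) ^ 2 ≤ (n : ℝ) ^ 2 * q + (n : ℝ) ^ 4 := by
    have h1 : ((∑ z : Q × Q, L z * L z : ℕ) : ℝ) ≤ ((n ^ 2 * q + n ^ 2 * n ^ 2 : ℕ) : ℝ) := by
      exact_mod_cast hsum2
    push_cast at h1
    calc ∑ z : Q × Q, (L z : ℝ) ^ 2 = ∑ z : Q × Q, (L z : ℝ) * (L z : ℝ) :=
          Finset.sum_congr rfl fun z _ => by ring
      _ ≤ _ := by linarith [h1]
  have hvar : ∑ z : Q × Q, ((L z : ℝ) - m) ^ 2 ≤ (n : ℝ) ^ 2 * q := by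
    have hexp : ∑ z : Q × Q, ((L z : ℝ) - m) ^ 2
        = (∑ z : Q × Q, (L z : ℝ) ^ 2) - 2 * m * (∑ z : Q × Q, (L z : ℝ))
          + ((q : ℝ) * q) * m ^ 2 := by
      have h1 : ∀ z : Q × Q, ((L z : ℝ) - m) ^ 2
          = (L z : ℝ) ^ 2 - 2 * m * (L z : ℝ) + m ^ 2 := fun z => by ring
      rw [Finset.sum_congr rfl fun z _ => h1 z]
      rw [Finset.sum_add_distrib, Finset.sum_sub_distrib, ← Finset.mul_sum,
        Finset.sum_const, Finset.card_univ, Fintype.card_prod, nsmul_eq_mul]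
      push_cast
      ring
    have e1 : 2 * m * ((n : ℝ) ^ 2 * q) = 2 * (n : ℝ) ^ 4 := by
      rw [hm]; field_simp
    have e2 : ((q : ℝ) * q) * m ^ 2 = (n : ℝ) ^ 4 := by
      rw [hm]; field_simp
    rw [hexp, hsum1R, e1, e2]
    linarith [hsum2R]
  -- Cauchy-Schwarz on S × P
  set X : ℝ := ((A + A).card : ℝ) * ((A * A).card : ℝ) with hX
  have hXcard : ((S ×ˢ P).card : ℝ) = X := by
    rw [Finset.card_product, hX, hSdef, hPdef]
    push_cast
    ring
  have hX0 : 0 ≤ X := by rw [← hXcard]; positivity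
  have hcs : (∑ z ∈ S ×ˢ P, ((L z : ℝ) - m)) ^ 2 ≤ X * ((n : ℝ) ^ 2 * q) := by
    calc (∑ z ∈ S ×ˢ P, ((L z : ℝ) - m)) ^ 2
        ≤ ((S ×ˢ P).card : ℝ) * ∑ z ∈ S ×ˢ P, ((L z : ℝ) - m) ^ 2 :=
          sq_sum_le_card_mul_sum_sq
      _ ≤ ((S ×ˢ P).card : ℝ) * ∑ z : Q × Q, ((L z : ℝ) - m) ^ 2 := by
          refine mul_le_mul_of_nonneg_left ?_ (by positivity)
          exact Finset.sum_le_sum_of_subset_of_nonneg (Finset.subset_univ _)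
            (fun z _ _ => sq_nonneg _)
      _ ≤ ((S ×ˢ P).card : ℝ) * ((n : ℝ) ^ 2 * q) :=
          mul_le_mul_of_nonneg_left hvar (by positivity)
      _ = X * ((n : ℝ) ^ 2 * q) := by rw [hXcard]
  have hB : (∑ z ∈ S ×ˢ P, ((L z : ℝ) - m)) ≤ Real.sqrt (X * ((n : ℝ) ^ 2 * q)) := by
    calc (∑ z ∈ S ×ˢ P, ((L z : ℝ) - m)) ≤ |∑ z ∈ S ×ˢ P, ((L z : ℝ) - m)| := le_abs_self _
      _ = Real.sqrt ((∑ z ∈ S ×ˢ P, ((L z : ℝ) - m)) ^ 2) := (Real.sqrt_sq_eq_abs _).symm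
      _ ≤ _ := Real.sqrt_le_sqrt hcs
  have hsum3R : (n : ℝ) ^ 3 ≤ ∑ z ∈ S ×ˢ P, (L z : ℝ) := by
    rw [← Nat.cast_sum]
    exact_mod_cast hsum3
  have hsplit : ∑ z ∈ S ×ˢ P, (L z : ℝ)
      = (∑ z ∈ S ×ˢ P, ((L z : ℝ) - m)) + X * m := by
    rw [Finset.sum_sub_distrib, Finset.sum_const, nsmul_eq_mul, hXcard]
    ring
  -- final contradiction
  have hmain : (n : ℝ) ^ 3 ≤ Real.sqrt (X * ((n : ℝ) ^ 2 * q)) + X * m := by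
    calc (n : ℝ) ^ 3 ≤ ∑ z ∈ S ×ˢ P, (L z : ℝ) := hsum3R
      _ = (∑ z ∈ S ×ˢ P, ((L z : ℝ) - m)) + X * m := hsplit
      _ ≤ _ := by linarith [hB]
  have hm0 : 0 < m := by rw [hm]; positivity
  have hXm : X * m < c * (n : ℝ) ^ 3 := by
    have h1 : X * m < (c * q * n) * m := mul_lt_mul_of_pos_right hlt1 hm0
    have h2 : (c * (q : ℝ) * n) * m = c * (n : ℝ) ^ 3 := by
      rw [hm]; field_simp
    linarith [h1, h2.le, h2.ge]
  have hsqrtbound : Real.sqrt (X * ((n : ℝ) ^ 2 * q)) ≤ Real.sqrt c * (n : ℝ) ^ 3 := by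
    have h1 : X * ((n : ℝ) ^ 2 * q) ≤ c * (n : ℝ) ^ 6 := by
      have h2 : X * ((n : ℝ) ^ 2 * q) ≤ (c * (n : ℝ) ^ 4 / q) * ((n : ℝ) ^ 2 * q) :=
        mul_le_mul_of_nonneg_right hlt2.le (by positivity)
      have h3 : (c * (n : ℝ) ^ 4 / q) * ((n : ℝ) ^ 2 * q) = c * (n : ℝ) ^ 6 := by
        field_simp
      linarith [h2, h3.le, h3.ge]
    calc Real.sqrt (X * ((n : ℝ) ^ 2 * q)) ≤ Real.sqrt (c * (n : ℝ) ^ 6) :=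
          Real.sqrt_le_sqrt h1
      _ = Real.sqrt c * (n : ℝ) ^ 3 := by
          rw [show (n : ℝ) ^ 6 = ((n : ℝ) ^ 3) ^ 2 by ring, Real.sqrt_mul hc.le,
            Real.sqrt_sq (by positivity)]
  have hn3 : (0 : ℝ) < (n : ℝ) ^ 3 := by positivity
  have hfin : (c + Real.sqrt c) * (n : ℝ) ^ 3 < 1 * (n : ℝ) ^ 3 :=
    mul_lt_mul_of_pos_right hc1 hn3
  nlinarith [hmain, hXm, hsqrtbound, hfin]
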